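/- arXiv:1811.02433 — 2 statements merged into one kernel-verified Lean document; each statement's English description precedes it below -/
import Mathlib

section
/- For coprime integers p, q ≥ 2 with p ≠ q, and any integers r, s with 1 ≤ r ≤ q−1 and 1 ≤ s ≤ p−1, the conformal weight satisfies h^{p,q}_{r,s} ≥ (1 − (p−q)²)/(4pq), with equality if and only if |rp − sq| = 1. -/
/-- For coprime `p, q ≥ 2` with `p ≠ q` and `1 ≤ r ≤ q−1`, `1 ≤ s ≤ p−1`, the
conformal weight `h^{p,q}_{r,s} = ((rp − sq)² − (p−q)²)/(4pq)` satisfies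
`h^{p,q}_{r,s} ≥ (1 − (p−q)²)/(4pq)`, with equality iff `|rp − sq| = 1`. -/
theorem kac_weight_lower_bound
    (p q r s : ℤ) (hp : 2 ≤ p) (hq : 2 ≤ q) (hpq : IsCoprime p q) (hne : p ≠ q)
    (hr1 : 1 ≤ r) (hr2 : r ≤ q - 1) (hs1 : 1 ≤ s) (hs2 : s ≤ p - 1) :
    (((r : ℚ) * p - s * q) ^ 2 - ((p : ℚ) - q) ^ 2) / (4 * p * q)
      ≥ (1 - ((p : ℚ) - q) ^ 2) / (4 * p * q)
    ∧ ((((r : ℚ) * p - s * q) ^ 2 - ((p : ℚ) - q) ^ 2) / (4 * p * q)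
        = (1 - ((p : ℚ) - q) ^ 2) / (4 * p * q) ↔ |r * p - s * q| = 1) := by
  have hk0 : r * p - s * q ≠ 0 := by
    intro h
    have heq : r * p = s * q := by linarith
    have hq_dvd : q ∣ r * p := ⟨s, by linarith⟩
    have hq_dvd_r : q ∣ r := (IsCoprime.dvd_of_dvd_mul_right hpq.symm hq_dvd)
    have := Int.le_of_dvd (by linarith) hq_dvd_r
    omega
  have hk1 : 1 ≤ (r * p - s * q) ^ 2 := by
    rcases lt_or_gt_of_ne hk0 with h | h <;> nlinarith
  have hk1Q : (1 : ℚ) ≤ ((r : ℚ) * p - s * q) ^ 2 := by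
    have := hk1
    push_cast
    exact_mod_cast (by exact_mod_cast hk1 : (1 : ℚ) ≤ ((r * p - s * q : ℤ) : ℚ) ^ 2)
  have hden : (0 : ℚ) < 4 * p * q := by
    have : (2 : ℚ) ≤ p := by exact_mod_cast hp
    have : (2 : ℚ) ≤ q := by exact_mod_cast hq
    nlinarith [(by exact_mod_cast hp : (2:ℚ) ≤ (p:ℚ))]
  constructor
  · apply div_le_div_of_nonneg_right (by linarith) hden.le
  · rw [div_eq_div_iff hden.ne' hden.ne']
    constructor
    · intro h
      have hnum : ((r : ℚ) * p - s * q) ^ 2 = 1 := by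
        have := mul_right_cancel₀ (ne_of_gt hden) h
        linarith
      have hZ : (r * p - s * q) ^ 2 = 1 := by exact_mod_cast (by push_cast at hnum ⊢; linarith : (((r * p - s * q : ℤ) : ℚ)) ^ 2 = 1)
      have h2 : (r * p - s * q - 1) * (r * p - s * q + 1) = 0 := by linear_combination hZ
      rcases mul_eq_zero.mp h2 with h1 | h1
      · have h3 : r * p - s * q = 1 := by linarith
        rw [h3]; norm_num
      · have h3 : r * p - s * q = -1 := by linarith
        rw [h3]; norm_num
    · intro h
      have hZ : (r * p - s * q) ^ 2 = 1 := by
        rcases abs_eq (by norm_num : (0:ℤ) ≤ 1) |>.mp h with h1 | h1 <;> rw [h1] <;> ring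
      have hQ : ((r : ℚ) * p - s * q) ^ 2 = 1 := by exact_mod_cast (by exact_mod_cast hZ : (((r * p - s * q : ℤ) : ℚ)) ^ 2 = 1)
      rw [hQ]
end

section
/- Kac table injectivity: for coprime integers p, q ≥ 2 and integers r, r' ∈ [1, q−1], s, s' ∈ [1, p−1], one has h^{p,q}_{r,s} = h^{p,q}_{r',s'} if and only if (r', s') = (r, s) or (r', s') = (q−r, p−s). -/
/-- Kac table injectivity: for coprime `p, q ≥ 2` and `r, r' ∈ [1, q−1]`,
`s, s' ∈ [1, p−1]`, one has `h^{p,q}_{r,s} = h^{p,q}_{r',s'}` iff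
`(r', s') = (r, s)` or `(r', s') = (q−r, p−s)`, where
`h^{p,q}_{r,s} = ((rp − sq)² − (p−q)²)/(4pq)`. -/
theorem kac_table_injectivity
    (p q r s r' s' : ℤ) (hp : 2 ≤ p) (hq : 2 ≤ q) (hpq : IsCoprime p q)
    (hr1 : 1 ≤ r) (hr2 : r ≤ q - 1) (hs1 : 1 ≤ s) (hs2 : s ≤ p - 1)
    (hr1' : 1 ≤ r') (hr2' : r' ≤ q - 1) (hs1' : 1 ≤ s') (hs2' : s' ≤ p - 1) :
    (((r : ℚ) * p - s * q) ^ 2 - ((p : ℚ) - q) ^ 2) / (4 * p * q)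
      = (((r' : ℚ) * p - s' * q) ^ 2 - ((p : ℚ) - q) ^ 2) / (4 * p * q)
    ↔ (r' = r ∧ s' = s) ∨ (r' = q - r ∧ s' = p - s) := by
  have hp0 : (0:ℤ) < p := by linarith
  have hq0 : (0:ℤ) < q := by linarith
  have hden : (4 : ℚ) * p * q ≠ 0 := by
    have : (0:ℚ) < p := by exact_mod_cast hp0
    have : (0:ℚ) < q := by exact_mod_cast hq0
    positivity
  constructor
  · intro h
    have h2 : (((r : ℚ) * p - s * q) ^ 2 - ((p : ℚ) - q) ^ 2)
        = (((r' : ℚ) * p - s' * q) ^ 2 - ((p : ℚ) - q) ^ 2) := by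
      rw [div_eq_div_iff hden hden] at h
      exact mul_right_cancel₀ hden h
    have h3 : ((r : ℚ) * p - s * q) ^ 2 = ((r' : ℚ) * p - s' * q) ^ 2 := by linarith
    have h4 : (r * p - s * q) ^ 2 = (r' * p - s' * q) ^ 2 := by exact_mod_cast h3
    rcases sq_eq_sq_iff_eq_or_eq_neg.mp h4 with h5 | h5
    · left
      have hd : (r' - r) * p = (s' - s) * q := by ring_nf; linarith [h5]
      have hdq : q ∣ (r' - r) * p := ⟨s' - s, by linarith [hd]⟩
      have hqr : q ∣ (r' - r) := (hpq.symm).dvd_of_dvd_mul_right hdq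
      have hrr : r' - r = 0 := by
        rcases hqr with ⟨k, hk⟩
        have hk0 : k = 0 := by nlinarith
        rw [hk0, mul_zero] at hk
        exact hk
      have hre : r' = r := by omega
      have hse : s' = s := by
        have : (s' - s) * q = 0 := by rw [← hd, hre]; ring
        have := mul_eq_zero.mp this
        omega
      exact ⟨hre, hse⟩
    · right
      have hd : (r' + r) * p = (s' + s) * q := by nlinarith [h5]
      have hdq : q ∣ (r' + r) * p := ⟨s' + s, by linarith [hd]⟩
      have hqr : q ∣ (r' + r) := (hpq.symm).dvd_of_dvd_mul_right hdq
      have hrr : r' + r = q := by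
        rcases hqr with ⟨k, hk⟩
        have hk0 : k = 1 := by nlinarith
        rw [hk0, mul_one] at hk
        exact hk
      have hse : s' + s = p := by
        have : p * q = (s' + s) * q := by rw [← hd, hrr]; ring
        have h0 : q ≠ 0 := by omega
        have := mul_right_cancel₀ h0 this
        omega
      exact ⟨by omega, by omega⟩
  · rintro (⟨h1, h2⟩ | ⟨h1, h2⟩) <;> subst h1 <;> subst h2
    · rfl
    · push_cast
      ring_nf
end
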